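/- arXiv:1710.11352 — 3 statements merged into one kernel-verified Lean document; each statement's English description precedes it below -/
import Mathlib

section
/- Every finite tree with at least three vertices that is not a star is killer-win for the cop and killer game. -/
namespace CopKiller

variable {V : Type*}

/-- A cop strategy: an initial vertex, and a move function that, given the history of
states `(cop position, killer position)` so far (most recent first), produces the cop's
next vertex. -/
structure CopStrategy (V : Type*) where
  init : V
  move : List (V × V) → V

/-- A killer strategy: an initial vertex chosen knowing the cop's initial vertex, and a
move function that, given the history of states so far (most recent first) and the cop's
just-chosen new position, produces the killer's next vertex. -/
structure KillerStrategy (V : Type*) where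
  init : V → V
  move : List (V × V) → V → V

/-- The history of states after `n` full rounds, most recent first. -/
def hist (cs : CopStrategy V) (ks : KillerStrategy V) : ℕ → List (V × V)
  | 0 => [(cs.init, ks.init cs.init)]
  | n + 1 =>
      let h := hist cs ks n
      let c := cs.move h
      (c, ks.move h c) :: h

/-- The cop's position after the cop's `n`-th move (`n = 0` is the initial position). -/
def copPos (cs : CopStrategy V) (ks : KillerStrategy V) : ℕ → V
  | 0 => cs.init
  | n + 1 => cs.move (hist cs ks n)

/-- The killer's position after the killer's `n`-th move (`n = 0` is the initial position). -/
def killerPos (cs : CopStrategy V) (ks : KillerStrategy V) : ℕ → V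
  | 0 => ks.init cs.init
  | n + 1 =>
      let h := hist cs ks n
      ks.move h (cs.move h)

/-- A cop strategy is legal on `G` when every move goes to a vertex adjacent to the cop's
current vertex. -/
def CopLegal (G : SimpleGraph V) (cs : CopStrategy V) : Prop :=
  ∀ (h : List (V × V)) (s : V × V), h.head? = some s → G.Adj s.1 (cs.move h)

/-- A killer strategy is legal on `G` when every move goes to a vertex adjacent to the
killer's current vertex. -/
def KillerLegal (G : SimpleGraph V) (ks : KillerStrategy V) : Prop :=
  ∀ (h : List (V × V)) (s : V × V), h.head? = some s → ∀ c : V, G.Adj s.2 (ks.move h c)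

/-- The cop wins the play: on some cop move the cop lands on the killer's current vertex,
the killer not having captured the cop on any earlier killer move. -/
def CopWinsPlay (cs : CopStrategy V) (ks : KillerStrategy V) : Prop :=
  ∃ n : ℕ, copPos cs ks (n + 1) = killerPos cs ks n ∧
    ∀ m : ℕ, 1 ≤ m → m ≤ n → killerPos cs ks m ≠ copPos cs ks m

/-- The killer wins the play: on some killer move the killer lands on the cop's current
vertex, the cop not having captured the killer on any earlier or simultaneous cop move. -/
def KillerWinsPlay (cs : CopStrategy V) (ks : KillerStrategy V) : Prop :=
  ∃ n : ℕ, 1 ≤ n ∧ killerPos cs ks n = copPos cs ks n ∧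
    ∀ m : ℕ, 1 ≤ m → m ≤ n → copPos cs ks m ≠ killerPos cs ks (m - 1)

/-- `G` is cop-win: the cop has a legal strategy winning against every legal killer strategy. -/
def CopWin (G : SimpleGraph V) : Prop :=
  ∃ cs : CopStrategy V, CopLegal G cs ∧
    ∀ ks : KillerStrategy V, KillerLegal G ks → CopWinsPlay cs ks

/-- `G` is killer-win: the killer has a legal strategy winning against every legal cop strategy. -/
def KillerWin (G : SimpleGraph V) : Prop :=
  ∃ ks : KillerStrategy V, KillerLegal G ks ∧
    ∀ cs : CopStrategy V, CopLegal G cs → KillerWinsPlay cs ks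

/-- `G` is a stalemate: neither player has a winning strategy. -/
def Stalemate (G : SimpleGraph V) : Prop :=
  ¬ CopWin G ∧ ¬ KillerWin G

/-- `G` has a universal vertex: a vertex adjacent to every other vertex. -/
def HasUniversalVertex (G : SimpleGraph V) : Prop :=
  ∃ v : V, ∀ w : V, w ≠ v → G.Adj v w

/-- `G` is a star: there is a vertex `v` such that the edges of `G` are exactly the pairs
containing `v`. -/
def IsStar (G : SimpleGraph V) : Prop :=
  ∃ v : V, ∀ a b : V, G.Adj a b ↔ (a = v ∨ b = v) ∧ a ≠ b

end CopKiller

namespace CopKiller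

/-- The tensor (categorical) product of two simple graphs:
`(g,h) ∼ (g',h')` iff `g ∼ g'` and `h ∼ h'`. -/
def tensorProd {α β : Type*} (G : SimpleGraph α) (H : SimpleGraph β) :
    SimpleGraph (α × β) where
  Adj x y := G.Adj x.1 y.1 ∧ H.Adj x.2 y.2
  symm := by
    constructor
    rintro x y ⟨h1, h2⟩
    exact ⟨h1.symm, h2.symm⟩
  loopless := by
    constructor
    rintro x ⟨h1, _⟩
    exact G.loopless.irrefl x.1 h1

/-- The strong product of two simple graphs: distinct `(g,h)` and `(g',h')` are adjacent
iff (`g = g'` or `g ∼ g'`) and (`h = h'` or `h ∼ h'`). -/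
def strongProd {α β : Type*} (G : SimpleGraph α) (H : SimpleGraph β) :
    SimpleGraph (α × β) where
  Adj x y := x ≠ y ∧ (x.1 = y.1 ∨ G.Adj x.1 y.1) ∧ (x.2 = y.2 ∨ H.Adj x.2 y.2)
  symm := by
    constructor
    rintro x y ⟨hne, h1, h2⟩
    exact ⟨hne.symm, h1.imp (fun e => e.symm) (fun a => a.symm),
      h2.imp (fun e => e.symm) (fun a => a.symm)⟩
  loopless := by
    constructor
    rintro x ⟨hne, -, -⟩
    exact hne rfl

open scoped Classical in
/-- The probability that the Erdős–Rényi random graph `G(n,p)` (each of the `n.choose 2`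
possible edges present independently with probability `p`) satisfies the property `A`. -/
noncomputable def erProb (n : ℕ) (p : ℝ) (A : SimpleGraph (Fin n) → Prop) : ℝ :=
  ∑ G : SimpleGraph (Fin n),
    if A G then p ^ G.edgeSet.ncard * (1 - p) ^ (n.choose 2 - G.edgeSet.ncard) else 0

/-- The number of cycles of length `n` in `G`, i.e. the number of subgraphs of `G`
isomorphic to the cycle graph `C_n`. -/
noncomputable def numCycles {V : Type*} (G : SimpleGraph V) (n : ℕ) : ℕ :=
  {H : G.Subgraph | Nonempty (H.coe ≃g SimpleGraph.cycleGraph n)}.ncard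

end CopKiller

section CKAux

open SimpleGraph Walk

variable {V : Type*} [DecidableEq V] {G : SimpleGraph V}

lemma CK_exists_shortest (hconn : G.Connected) (u v : V) :
    ∃ p : G.Walk u v, p.IsPath ∧ p.length = G.dist u v := by
  obtain ⟨p, hp⟩ := hconn.exists_walk_length_eq_dist u v
  refine ⟨p.bypass, p.bypass_isPath, le_antisymm ?_ (dist_le _)⟩
  rw [← hp]; exact p.length_bypass_le

lemma CK_path_length_eq_dist (hconn : G.Connected) (hacyc : G.IsAcyclic) {u v : V}
    (p : G.Walk u v) (hp : p.IsPath) : p.length = G.dist u v := by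
  obtain ⟨q, hq, hql⟩ := CK_exists_shortest hconn u v
  have h := hacyc.path_unique ⟨p, hp⟩ ⟨q, hq⟩
  rw [← hql]
  exact congrArg Walk.length (congrArg Subtype.val h)

omit [DecidableEq V] in
lemma CK_concat_isPath {u v w : V} {p : G.Walk u v} (hp : p.IsPath) (h : G.Adj v w)
    (hw : w ∉ p.support) : (p.concat h).IsPath := by
  rw [isPath_def, support_concat]
  simp only [List.concat_eq_append, List.nodup_append, List.nodup_cons, List.not_mem_nil,
    not_false_iff, List.nodup_nil, and_true, List.disjoint_singleton]
  exact ⟨hp.support_nodup, by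
    refine ⟨trivial, ?_⟩; intro a ha b hb hab; rw [List.mem_singleton] at hb; subst hb hab; exact hw ha⟩

lemma CK_dist_adj_cases (hconn : G.Connected) (hacyc : G.IsAcyclic) {a b : V}
    (hab : G.Adj a b) (x : V) :
    G.dist x b + 1 = G.dist x a ∨ G.dist x a + 1 = G.dist x b := by
  obtain ⟨p, hp, hl⟩ := CK_exists_shortest hconn x a
  by_cases hb : b ∈ p.support
  · left
    have h1 : (p.takeUntil b hb).length = G.dist x b :=
      CK_path_length_eq_dist hconn hacyc _ (hp.takeUntil hb)
    have h2 : (p.dropUntil b hb).length = G.dist b a :=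
      CK_path_length_eq_dist hconn hacyc _ (hp.dropUntil hb)
    have h3 : (p.takeUntil b hb).length + (p.dropUntil b hb).length = p.length := by
      rw [← Walk.length_append, Walk.take_spec]
    have hba : G.dist b a = 1 := dist_eq_one_iff_adj.mpr hab.symm
    omega
  · right
    have h4 := CK_path_length_eq_dist hconn hacyc _ (CK_concat_isPath hp hab hb)
    rw [Walk.length_concat] at h4
    omega

lemma CK_dist_le_of_mem_support {x a u : V} {p : G.Walk x a}
    (hu : u ∈ p.support) : G.dist x u ≤ p.length :=
  le_trans (dist_le (p.takeUntil u hu)) (Walk.length_takeUntil_le p hu)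

lemma CK_eq_of_two_shortest (hconn : G.Connected) (hacyc : G.IsAcyclic) {v x w c : V}
    (hw : G.Adj w x) (hc : G.Adj c x)
    (h1 : G.dist v x = G.dist v w + 1) (h2 : G.dist v x = G.dist v c + 1) : w = c := by
  obtain ⟨p, hp, hpl⟩ := CK_exists_shortest hconn v w
  obtain ⟨q, hq, hql⟩ := CK_exists_shortest hconn v c
  have hxp : x ∉ p.support := fun hx => by
    have := CK_dist_le_of_mem_support hx; omega
  have hxq : x ∉ q.support := fun hx => by
    have := CK_dist_le_of_mem_support hx; omega
  have hP : (p.concat hw).IsPath := CK_concat_isPath hp hw hxp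
  have hQ : (q.concat hc).IsPath := CK_concat_isPath hq hc hxq
  have heq : p.concat hw = q.concat hc :=
    congrArg Subtype.val (hacyc.path_unique ⟨_, hP⟩ ⟨_, hQ⟩)
  have h5 := congrArg (fun r : G.Walk v x => r.reverse.getVert 1) heq
  simpa [Walk.reverse_concat, Walk.getVert_cons_succ] using h5

lemma CK_exists_toward (hconn : G.Connected) (hacyc : G.IsAcyclic) {k c : V} (h : k ≠ c) :
    ∃ w, G.Adj k w ∧ G.dist w c + 1 = G.dist k c := by
  obtain ⟨p, hp, hl⟩ := CK_exists_shortest hconn k c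
  cases p with
  | nil => exact absurd rfl h
  | cons hadj q =>
    refine ⟨_, hadj, ?_⟩
    have hq := CK_path_length_eq_dist hconn hacyc q hp.of_cons
    rw [Walk.length_cons] at hl
    omega

end CKAux

open scoped Classical in
/-- The killer's move function: from state `s` (read off the history head), capture the
cop if possible, otherwise step toward the cop's previous position. -/
noncomputable def CKmove {V : Type*} (G : SimpleGraph V) (nbr : V → V) (toward : V → V → V)
    (h : List (V × V)) (c' : V) : V :=
  let s := h.head?.getD (c', c')
  if G.Adj s.2 c' then c' else if s.2 = s.1 then nbr s.2 else toward s.2 s.1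

open scoped Classical in
lemma CKmove_head {V : Type*} (G : SimpleGraph V) (nbr : V → V) (toward : V → V → V)
    {h : List (V × V)} {s : V × V} (hs : h.head? = some s) (c' : V) :
    CKmove G nbr toward h c' =
      if G.Adj s.2 c' then c' else if s.2 = s.1 then nbr s.2 else toward s.2 s.1 := by
  unfold CKmove
  rw [hs]
  rfl

/-- Every finite tree with at least three vertices that is not a star is
killer-win for the cop and killer game. -/
theorem tree_not_star_killerWin {V : Type*} [Fintype V] (G : SimpleGraph V)
    (hconn : G.Connected) (hacyc : G.IsAcyclic)
    (hcard : 3 ≤ Fintype.card V) (hstar : ¬ CopKiller.IsStar G) :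
    CopKiller.KillerWin G := by
  classical
  have hnt : Nontrivial V := Fintype.one_lt_card_iff_nontrivial.mp (by omega)
  -- every vertex has a non-neighbor (otherwise G would be a star)
  have huniv : ∀ v : V, ∃ w, w ≠ v ∧ ¬ G.Adj v w := by
    intro v
    by_contra hno
    push_neg at hno
    apply hstar
    refine ⟨v, fun a b => ⟨fun hab => ⟨?_, hab.ne⟩, ?_⟩⟩
    · by_contra hor
      push_neg at hor
      obtain ⟨hav, hbv⟩ := hor
      have h1 : (SimpleGraph.Walk.cons hab SimpleGraph.Walk.nil : G.Walk a b).IsPath := by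
        simp [SimpleGraph.Walk.isPath_def, hab.ne]
      have h2 : (SimpleGraph.Walk.cons (hno a hav).symm
          (SimpleGraph.Walk.cons (hno b hbv) SimpleGraph.Walk.nil) : G.Walk a b).IsPath := by
        simp [SimpleGraph.Walk.isPath_def, hab.ne, hav, Ne.symm hbv,
          fun h : a = v => hav h]
      have e1 := CK_path_length_eq_dist hconn hacyc _ h1
      have e2 := CK_path_length_eq_dist hconn hacyc _ h2
      simp [SimpleGraph.Walk.length_cons] at e1 e2
      omega
    · rintro ⟨(rfl | rfl), hne⟩
      · exact hno b (Ne.symm hne)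
      · exact (hno a hne).symm
  -- from every vertex there is a vertex at distance exactly 2
  have hdist2 : ∀ v : V, ∃ k, G.dist v k = 2 := by
    intro v
    obtain ⟨w, hwv, hnadj⟩ := huniv v
    have hvw : v ≠ w := fun h => hwv h.symm
    have hd0 : G.dist v w ≠ 0 := fun h => hvw (hconn.dist_eq_zero_iff.mp h)
    have hd1 : G.dist v w ≠ 1 := fun h => hnadj (SimpleGraph.dist_eq_one_iff_adj.mp h)
    obtain ⟨a, hva, hda⟩ := CK_exists_toward hconn hacyc hvw
    have haw : a ≠ w := by
      rintro rfl
      rw [SimpleGraph.dist_self] at hda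
      omega
    obtain ⟨b, hab, hdb⟩ := CK_exists_toward hconn hacyc haw
    have hva1 : G.dist v a = 1 := SimpleGraph.dist_eq_one_iff_adj.mpr hva
    rcases CK_dist_adj_cases hconn hacyc hab v with h | h
    · have hvb : v = b := hconn.dist_eq_zero_iff.mp (by omega)
      subst hvb
      exact (by omega : False).elim
    · exact ⟨b, by omega⟩
  -- the `toward` function: one step along the unique path
  let toward : V → V → V := fun k c =>
    if h : k = c then k else Classical.choose (CK_exists_toward hconn hacyc h)
  have toward_adj : ∀ {k c : V}, k ≠ c → G.Adj k (toward k c) := by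
    intro k c h
    show G.Adj k (if h' : k = c then k else _)
    rw [dif_neg h]
    exact (Classical.choose_spec (CK_exists_toward hconn hacyc h)).1
  have toward_dist : ∀ {k c : V}, k ≠ c → G.dist (toward k c) c + 1 = G.dist k c := by
    intro k c h
    show G.dist (if h' : k = c then k else _) c + 1 = _
    rw [dif_neg h]
    exact (Classical.choose_spec (CK_exists_toward hconn hacyc h)).2
  let nbr : V → V := fun v => toward v (Classical.choose (exists_ne v))
  have nbr_adj : ∀ v, G.Adj v (nbr v) :=
    fun v => toward_adj (Ne.symm (Classical.choose_spec (exists_ne v)))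
  let kinit : V → V := fun c => Classical.choose (hdist2 c)
  have kinit_dist : ∀ c, G.dist c (kinit c) = 2 := fun c => Classical.choose_spec (hdist2 c)
  let ks : CopKiller.KillerStrategy V := ⟨kinit, CKmove G nbr toward⟩
  refine ⟨ks, ?_, ?_⟩
  · -- legality
    intro h s hs cnew
    show G.Adj s.2 (CKmove G nbr toward h cnew)
    rw [CKmove_head G nbr toward hs cnew]
    split_ifs with h1 h2
    · exact h1
    · exact nbr_adj _
    · exact toward_adj h2
  · intro cs hcs
    have hist_head : ∀ n, (CopKiller.hist cs ks n).head? =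
        some (CopKiller.copPos cs ks n, CopKiller.killerPos cs ks n) := by
      intro n
      cases n <;> rfl
    have hadjc : ∀ n, G.Adj (CopKiller.copPos cs ks n) (CopKiller.copPos cs ks (n+1)) :=
      fun n => hcs _ _ (hist_head n)
    have hkrec : ∀ n, CopKiller.killerPos cs ks (n+1) =
        if G.Adj (CopKiller.killerPos cs ks n) (CopKiller.copPos cs ks (n+1)) then
          CopKiller.copPos cs ks (n+1)
        else if CopKiller.killerPos cs ks n = CopKiller.copPos cs ks n then
          nbr (CopKiller.killerPos cs ks n)
        else toward (CopKiller.killerPos cs ks n) (CopKiller.copPos cs ks n) := by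
      intro n
      show CKmove G nbr toward (CopKiller.hist cs ks n) (cs.move (CopKiller.hist cs ks n)) = _
      rw [CKmove_head G nbr toward (hist_head n)]
      rfl
    -- the basic invariant step
    have alive0 : G.dist (CopKiller.killerPos cs ks 0) (CopKiller.copPos cs ks 0) = 2 := by
      rw [SimpleGraph.dist_comm]
      exact kinit_dist cs.init
    have alive_step : ∀ n, G.dist (CopKiller.killerPos cs ks n) (CopKiller.copPos cs ks n) = 2 →
        CopKiller.killerPos cs ks (n+1) = CopKiller.copPos cs ks (n+1) ∨
        (CopKiller.killerPos cs ks (n+1) =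
            toward (CopKiller.killerPos cs ks n) (CopKiller.copPos cs ks n) ∧
          G.dist (CopKiller.killerPos cs ks (n+1)) (CopKiller.copPos cs ks (n+1)) = 2) := by
      intro n h2
      have hne : CopKiller.killerPos cs ks n ≠ CopKiller.copPos cs ks n := by
        intro h
        rw [h, SimpleGraph.dist_self] at h2
        omega
      rw [hkrec n]
      by_cases hadj : G.Adj (CopKiller.killerPos cs ks n) (CopKiller.copPos cs ks (n+1))
      · left
        rw [if_pos hadj]
      · right
        rw [if_neg hadj, if_neg hne]
        refine ⟨rfl, ?_⟩
        have hwd := toward_dist hne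
        rcases CK_dist_adj_cases hconn hacyc (hadjc n)
            (toward (CopKiller.killerPos cs ks n) (CopKiller.copPos cs ks n)) with h | h
        · exfalso
          apply hadj
          have hw0 : toward (CopKiller.killerPos cs ks n) (CopKiller.copPos cs ks n) =
              CopKiller.copPos cs ks (n+1) := hconn.dist_eq_zero_iff.mp (by omega)
          rw [← hw0]
          exact toward_adj hne
        · omega
    -- main dichotomy
    have main : ∀ n, (∀ m ≤ n,
          G.dist (CopKiller.killerPos cs ks m) (CopKiller.copPos cs ks m) = 2) ∨
        ∃ m, 1 ≤ m ∧ m ≤ n ∧ CopKiller.killerPos cs ks m = CopKiller.copPos cs ks m ∧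
          ∀ j ≤ m - 1,
            G.dist (CopKiller.killerPos cs ks j) (CopKiller.copPos cs ks j) = 2 := by
      intro n
      induction n with
      | zero =>
        left
        intro m hm
        have : m = 0 := Nat.le_zero.mp hm
        subst this
        exact alive0
      | succ n ih =>
        rcases ih with ha | ⟨m, h1, h2, h3, h4⟩
        · rcases alive_step n (ha n le_rfl) with hc | ⟨_, hd⟩
          · right
            exact ⟨n+1, by omega, le_rfl, hc, fun j hj => ha j (by omega)⟩
          · left
            intro m hm
            rcases Nat.lt_or_ge m (n+1) with h | h
            · exact ha m (by omega)
            · have : m = n + 1 := by omega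
              subst this
              exact hd
        · exact Or.inr ⟨m, h1, by omega, h3, h4⟩
    -- territory argument: the killer cannot stay alive for `card V` rounds
    have terr : ∀ n, (∀ m ≤ n + 1,
          G.dist (CopKiller.killerPos cs ks m) (CopKiller.copPos cs ks m) = 2) →
        (Finset.univ.filter (fun v =>
            G.dist v (CopKiller.killerPos cs ks n) < G.dist v (CopKiller.copPos cs ks n))) ⊂
        (Finset.univ.filter (fun v =>
            G.dist v (CopKiller.killerPos cs ks (n+1)) <
              G.dist v (CopKiller.copPos cs ks (n+1)))) := by
      intro n ha
      have h2n := ha n (by omega)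
      have h2n1 := ha (n+1) le_rfl
      rcases alive_step n h2n with hc | ⟨hw, _⟩
      · rw [hc, SimpleGraph.dist_self] at h2n1
        omega
      have hne : CopKiller.killerPos cs ks n ≠ CopKiller.copPos cs ks n := by
        intro h
        rw [h, SimpleGraph.dist_self] at h2n
        omega
      have hwk : G.Adj (CopKiller.killerPos cs ks n)
          (toward (CopKiller.killerPos cs ks n) (CopKiller.copPos cs ks n)) := toward_adj hne
      have hwc1 : G.dist (toward (CopKiller.killerPos cs ks n) (CopKiller.copPos cs ks n))
          (CopKiller.copPos cs ks n) = 1 := by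
        have := toward_dist hne
        omega
      have hwc : G.Adj (toward (CopKiller.killerPos cs ks n) (CopKiller.copPos cs ks n))
          (CopKiller.copPos cs ks n) := SimpleGraph.dist_eq_one_iff_adj.mp hwc1
      have hwc2 : G.dist (toward (CopKiller.killerPos cs ks n) (CopKiller.copPos cs ks n))
          (CopKiller.copPos cs ks (n+1)) = 2 := by
        rw [← hw]
        exact h2n1
      rw [Finset.ssubset_def]
      constructor
      · intro v hv
        simp only [Finset.mem_filter, Finset.mem_univ, true_and] at hv ⊢
        rw [hw]
        rcases CK_dist_adj_cases hconn hacyc hwk v with e1 | e1 <;>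
          rcases CK_dist_adj_cases hconn hacyc hwc v with e2 | e2 <;>
          rcases CK_dist_adj_cases hconn hacyc (hadjc n) v with e3 | e3
        all_goals try omega
        -- remaining: e2 : dist v (c n) = dist v w + 1, e3 : dist v (c (n+1)) + 1 = dist v (c n)
        all_goals {
          exfalso
          have hEq := CK_eq_of_two_shortest (v := v) hconn hacyc hwc (hadjc n).symm
            (by omega) (by omega)
          rw [hEq, SimpleGraph.dist_self] at hwc2
          omega }
      · intro hsub
        have hwin : toward (CopKiller.killerPos cs ks n) (CopKiller.copPos cs ks n) ∈
            Finset.univ.filter (fun v =>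
              G.dist v (CopKiller.killerPos cs ks (n+1)) <
                G.dist v (CopKiller.copPos cs ks (n+1))) := by
          simp only [Finset.mem_filter, Finset.mem_univ, true_and]
          rw [hw, SimpleGraph.dist_self, hwc2]
          omega
        have hmem := hsub hwin
        simp only [Finset.mem_filter, Finset.mem_univ, true_and] at hmem
        have hk1 : G.dist (toward (CopKiller.killerPos cs ks n) (CopKiller.copPos cs ks n))
            (CopKiller.killerPos cs ks n) = 1 :=
          SimpleGraph.dist_eq_one_iff_adj.mpr hwk.symm
        omega
    have terr_card : ∀ n, (∀ m ≤ n,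
          G.dist (CopKiller.killerPos cs ks m) (CopKiller.copPos cs ks m) = 2) →
        n ≤ (Finset.univ.filter (fun v =>
            G.dist v (CopKiller.killerPos cs ks n) <
              G.dist v (CopKiller.copPos cs ks n))).card := by
      intro n
      induction n with
      | zero => intro _; omega
      | succ n ih =>
        intro ha
        have h1 := ih (fun m hm => ha m (by omega))
        have h2 := Finset.card_lt_card (terr n ha)
        omega
    have bound : ∀ n, (∀ m ≤ n,
          G.dist (CopKiller.killerPos cs ks m) (CopKiller.copPos cs ks m) = 2) →
        n < Fintype.card V := by
      intro n ha
      have h1 := terr_card n ha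
      have hcop : CopKiller.copPos cs ks n ∉ Finset.univ.filter (fun v =>
          G.dist v (CopKiller.killerPos cs ks n) < G.dist v (CopKiller.copPos cs ks n)) := by
        simp [SimpleGraph.dist_self]
      have h2 : (Finset.univ.filter (fun v =>
          G.dist v (CopKiller.killerPos cs ks n) <
            G.dist v (CopKiller.copPos cs ks n))).card < Fintype.card V := by
        rw [← Finset.card_univ]
        exact Finset.card_lt_card ⟨Finset.subset_univ _,
          fun h => hcop (h (Finset.mem_univ _))⟩
      omega
    rcases main (Fintype.card V) with ha | ⟨m, h1, h2, h3, h4⟩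
    · exact absurd (bound _ ha) (lt_irrefl _)
    · refine ⟨m, h1, h3, ?_⟩
      intro j hj1 hjm heq
      have hal : G.dist (CopKiller.killerPos cs ks (j-1)) (CopKiller.copPos cs ks (j-1)) = 2 :=
        h4 (j-1) (by omega)
      have hadj : G.Adj (CopKiller.copPos cs ks (j-1)) (CopKiller.copPos cs ks j) := by
        have := hadjc (j-1)
        rwa [show j - 1 + 1 = j by omega] at this
      rw [heq] at hadj
      have : G.dist (CopKiller.killerPos cs ks (j-1)) (CopKiller.copPos cs ks (j-1)) = 1 := by
        rw [SimpleGraph.dist_comm]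
        exact SimpleGraph.dist_eq_one_iff_adj.mpr hadj
      omega
end

section
/- For all integers m and n with either (2 ≤ m and 2 ≤ n) or (m = 1 and n ≥ 4), the m × n grid graph (the Cartesian product of the path P_m with the path P_n) is killer-win for the cop and killer game. -/
section GridKillerProof

open SimpleGraph CopKiller

namespace GridKiller

variable {m n : ℕ}

open scoped Classical

def xc (v : Fin m × Fin n) : ℤ := ((v.1 : ℕ) : ℤ)
def yc (v : Fin m × Fin n) : ℤ := ((v.2 : ℕ) : ℤ)

def mkF {m : ℕ} (hm : 0 < m) (a : ℤ) : Fin m := ⟨a.toNat % m, Nat.mod_lt _ hm⟩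

lemma mkF_val {m : ℕ} (hm : 0 < m) {a : ℤ} (h0 : 0 ≤ a) (h1 : a < m) :
    (((mkF hm a) : ℕ) : ℤ) = a := by
  simp only [mkF]
  have ht : a.toNat < m := by omega
  have := Nat.mod_eq_of_lt ht
  simp [this]
  omega

lemma adj_iff {a b : Fin m × Fin n} :
    ((pathGraph m).boxProd (pathGraph n)).Adj a b ↔
      ((xc a + 1 = xc b ∨ xc b + 1 = xc a) ∧ yc a = yc b) ∨
      ((yc a + 1 = yc b ∨ yc b + 1 = yc a) ∧ xc a = xc b) := by
  simp only [SimpleGraph.boxProd_adj, SimpleGraph.pathGraph_adj, Fin.ext_iff, xc, yc]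
  omega

lemma eq_iff {a b : Fin m × Fin n} : a = b ↔ xc a = xc b ∧ yc a = yc b := by
  simp only [Prod.ext_iff, Fin.ext_iff, xc, yc]
  omega

/-- The offset the killer keeps from the cop. -/
def off (m n : ℕ) (c : Fin m × Fin n) : ℤ × ℤ :=
  if 2 ≤ m then
    ((if (c.1 : ℕ) + 1 < m then 1 else -1), (if (c.2 : ℕ) + 1 < n then 1 else -1))
  else (0, if (c.2 : ℕ) + 2 < n then 2 else -2)

lemma off_bounds (m n : ℕ) (c : Fin m × Fin n) :
    (-2 ≤ (off m n c).1 ∧ (off m n c).1 ≤ 2) ∧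
    (-2 ≤ (off m n c).2 ∧ (off m n c).2 ≤ 2) := by
  simp only [off]
  split_ifs <;> norm_num

/-- A fallback always-legal move. -/
def nudge (hn : 0 < n) (v : Fin m × Fin n) : Fin m × Fin n :=
  (v.1, mkF hn (if (v.2 : ℕ) + 1 < n then ((v.2 : ℕ) : ℤ) + 1 else ((v.2 : ℕ) : ℤ) - 1))

lemma nudge_adj (hn : 0 < n) (hn2 : 2 ≤ n) (v : Fin m × Fin n) :
    ((pathGraph m).boxProd (pathGraph n)).Adj v (nudge hn v) := by
  have hv : (v.2 : ℕ) < n := v.2.isLt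
  rw [adj_iff]
  right
  set A : ℤ := if (v.2 : ℕ) + 1 < n then ((v.2 : ℕ) : ℤ) + 1 else ((v.2 : ℕ) : ℤ) - 1 with hA
  have h0 : 0 ≤ A ∧ A < n := by rw [hA]; split <;> omega
  have hy : yc (nudge hn v) = A := mkF_val hn h0.1 h0.2
  refine ⟨?_, rfl⟩
  rw [hy, hA]
  simp only [yc]
  split <;> omega

/-- The killer's strategy. -/
noncomputable def killer (hm : 0 < m) (hn : 0 < n) : KillerStrategy (Fin m × Fin n) where
  init c := (mkF hm (xc c + (off m n c).1), mkF hn (yc c + (off m n c).2))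
  move h c :=
    h.head?.elim c fun s =>
      if ((pathGraph m).boxProd (pathGraph n)).Adj s.2 c then c
      else if ((pathGraph m).boxProd (pathGraph n)).Adj s.2
          (mkF hm (xc s.2 + xc c - xc s.1), mkF hn (yc s.2 + yc c - yc s.1)) then
          (mkF hm (xc s.2 + xc c - xc s.1), mkF hn (yc s.2 + yc c - yc s.1))
      else nudge hn s.2

lemma killer_legal (hm : 0 < m) (hn : 0 < n) (hn2 : 2 ≤ n) :
    KillerLegal ((pathGraph m).boxProd (pathGraph n)) (killer hm hn) := by
  intro h s hs c
  have : (killer hm hn).move h c = h.head?.elim c (fun s =>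
      if ((pathGraph m).boxProd (pathGraph n)).Adj s.2 c then c
      else if ((pathGraph m).boxProd (pathGraph n)).Adj s.2
          (mkF hm (xc s.2 + xc c - xc s.1), mkF hn (yc s.2 + yc c - yc s.1)) then
          (mkF hm (xc s.2 + xc c - xc s.1), mkF hn (yc s.2 + yc c - yc s.1))
      else nudge hn s.2) := rfl
  rw [this, hs]
  simp only [Option.elim]
  split_ifs with h1 h2
  · exact h1
  · exact h2
  · exact nudge_adj hn hn2 s.2

lemma hist_head {V : Type*} (cs : CopStrategy V) (ks : KillerStrategy V) (j : ℕ) :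
    (hist cs ks j).head? = some (copPos cs ks j, killerPos cs ks j) := by
  cases j <;> rfl

lemma killerPos_succ_eq (hm : 0 < m) (hn : 0 < n) (cs : CopStrategy (Fin m × Fin n)) (j : ℕ) :
    killerPos cs (killer hm hn) (j + 1) =
      (let k := killerPos cs (killer hm hn) j
       let c := copPos cs (killer hm hn) j
       let c' := copPos cs (killer hm hn) (j + 1)
       if ((pathGraph m).boxProd (pathGraph n)).Adj k c' then c'
       else if ((pathGraph m).boxProd (pathGraph n)).Adj k
          (mkF hm (xc k + xc c' - xc c), mkF hn (yc k + yc c' - yc c)) then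
          (mkF hm (xc k + xc c' - xc c), mkF hn (yc k + yc c' - yc c))
       else nudge hn k) := by
  have h1 : killerPos cs (killer hm hn) (j + 1)
      = (killer hm hn).move (hist cs (killer hm hn) j)
          (copPos cs (killer hm hn) (j + 1)) := rfl
  rw [h1]
  have h2 : (killer hm hn).move (hist cs (killer hm hn) j)
      (copPos cs (killer hm hn) (j + 1)) =
      ((hist cs (killer hm hn) j).head?).elim (copPos cs (killer hm hn) (j + 1)) (fun s =>
      if ((pathGraph m).boxProd (pathGraph n)).Adj s.2 (copPos cs (killer hm hn) (j + 1)) then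
        (copPos cs (killer hm hn) (j + 1))
      else if ((pathGraph m).boxProd (pathGraph n)).Adj s.2
          (mkF hm (xc s.2 + xc (copPos cs (killer hm hn) (j + 1)) - xc s.1),
           mkF hn (yc s.2 + yc (copPos cs (killer hm hn) (j + 1)) - yc s.1)) then
          (mkF hm (xc s.2 + xc (copPos cs (killer hm hn) (j + 1)) - xc s.1),
           mkF hn (yc s.2 + yc (copPos cs (killer hm hn) (j + 1)) - yc s.1))
      else nudge hn s.2) := rfl
  rw [h2, hist_head]
  rfl


lemma xc_nonneg (v : Fin m × Fin n) : 0 ≤ xc v := Int.natCast_nonneg _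
lemma xc_lt (v : Fin m × Fin n) : xc v < m := by simp only [xc]; exact_mod_cast v.1.isLt
lemma yc_nonneg (v : Fin m × Fin n) : 0 ≤ yc v := Int.natCast_nonneg _
lemma yc_lt (v : Fin m × Fin n) : yc v < n := by simp only [yc]; exact_mod_cast v.2.isLt

lemma grid_killerWin_aux (hm : 0 < m) (hn : 0 < n) (hn2 : 2 ≤ n)
    (H1 : ∀ c0 : Fin m × Fin n,
      0 ≤ xc c0 + (off m n c0).1 ∧ xc c0 + (off m n c0).1 < m ∧
      0 ≤ yc c0 + (off m n c0).2 ∧ yc c0 + (off m n c0).2 < n)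
    (H3 : ∀ c0 c k : Fin m × Fin n,
      xc k = xc c + (off m n c0).1 → yc k = yc c + (off m n c0).2 →
      ¬ ((pathGraph m).boxProd (pathGraph n)).Adj c k)
    (H2 : ∀ c0 c c' k : Fin m × Fin n,
      xc k = xc c + (off m n c0).1 → yc k = yc c + (off m n c0).2 →
      ((pathGraph m).boxProd (pathGraph n)).Adj c c' →
      ¬ ((pathGraph m).boxProd (pathGraph n)).Adj k c' →
      ∃ t : Fin m × Fin n, xc t = xc c' + (off m n c0).1 ∧ yc t = yc c' + (off m n c0).2 ∧
        ((pathGraph m).boxProd (pathGraph n)).Adj k t ∧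
        (off m n c0).1 * xc c' + (off m n c0).2 * yc c' + 1 ≤
          (off m n c0).1 * xc c + (off m n c0).2 * yc c) :
    KillerWin ((pathGraph m).boxProd (pathGraph n)) := by
  refine ⟨killer hm hn, killer_legal hm hn hn2, ?_⟩
  intro cs hcs
  set G := (pathGraph m).boxProd (pathGraph n) with hG
  set ks := killer hm hn with hks
  set c : ℕ → Fin m × Fin n := fun j => copPos cs ks j with hc
  set k : ℕ → Fin m × Fin n := fun j => killerPos cs ks j with hk
  set o1 : ℤ := (off m n cs.init).1 with ho1
  set o2 : ℤ := (off m n cs.init).2 with ho2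
  have hc0 : c 0 = cs.init := rfl
  have hadj : ∀ j, G.Adj (c j) (c (j + 1)) := by
    intro j
    have := hcs (hist cs ks j) (c j, k j) (hist_head cs ks j)
    exact this
  -- invariant
  have hib := H1 cs.init
  have inv0 : xc (k 0) = xc (c 0) + o1 ∧ yc (k 0) = yc (c 0) + o2 := by
    constructor
    · exact mkF_val hm hib.1 hib.2.1
    · exact mkF_val hn hib.2.2.1 hib.2.2.2
  have step : ∀ j, (xc (k j) = xc (c j) + o1 ∧ yc (k j) = yc (c j) + o2) →
      ¬ G.Adj (k j) (c (j + 1)) →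
      (xc (k (j + 1)) = xc (c (j + 1)) + o1 ∧ yc (k (j + 1)) = yc (c (j + 1)) + o2) ∧
      o1 * xc (c (j + 1)) + o2 * yc (c (j + 1)) + 1 ≤ o1 * xc (c j) + o2 * yc (c j) := by
    intro j hinv hnk
    obtain ⟨t, htx, hty, htadj, hdec⟩ := H2 cs.init (c j) (c (j + 1)) (k j)
      hinv.1 hinv.2 (hadj j) hnk
    have hT : (mkF hm (xc (k j) + xc (c (j + 1)) - xc (c j)),
        mkF hn (yc (k j) + yc (c (j + 1)) - yc (c j))) = t := by
      rw [eq_iff]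
      have e1 : xc (k j) + xc (c (j + 1)) - xc (c j) = xc t := by rw [htx, hinv.1]; ring
      have e2 : yc (k j) + yc (c (j + 1)) - yc (c j) = yc t := by rw [hty, hinv.2]; ring
      constructor
      · show ((mkF hm _ : ℕ) : ℤ) = xc t
        rw [e1]; exact mkF_val hm (xc_nonneg t) (xc_lt t)
      · show ((mkF hn _ : ℕ) : ℤ) = yc t
        rw [e2]; exact mkF_val hn (yc_nonneg t) (yc_lt t)
    have hmove : k (j + 1) = t := by
      have hthis : k (j + 1) =
          (if G.Adj (k j) (c (j + 1)) then c (j + 1)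
           else if G.Adj (k j) (mkF hm (xc (k j) + xc (c (j + 1)) - xc (c j)),
               mkF hn (yc (k j) + yc (c (j + 1)) - yc (c j))) then
               (mkF hm (xc (k j) + xc (c (j + 1)) - xc (c j)),
                mkF hn (yc (k j) + yc (c (j + 1)) - yc (c j)))
           else nudge hn (k j)) := killerPos_succ_eq hm hn cs j
      rw [hthis, if_neg hnk, hT, if_pos htadj]
    rw [hmove]
    exact ⟨⟨htx, hty⟩, hdec⟩
  have prefixlem : ∀ N, (∀ i, i < N → ¬ G.Adj (k i) (c (i + 1))) →
      (xc (k N) = xc (c N) + o1 ∧ yc (k N) = yc (c N) + o2) ∧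
      o1 * xc (c N) + o2 * yc (c N) + N ≤ o1 * xc (c 0) + o2 * yc (c 0) := by
    intro N
    induction N with
    | zero => intro _; exact ⟨inv0, by simp⟩
    | succ N ih =>
      intro hno
      have h1 := ih (fun i hi => hno i (by omega))
      have h2 := step N h1.1 (hno N (by omega))
      refine ⟨h2.1, ?_⟩
      have := h2.2
      push_cast
      push_cast at h1
      linarith [h1.2]
  -- a kill eventually happens
  have hbound : ∀ j, -2 * m - 2 * n ≤ o1 * xc (c j) + o2 * yc (c j) := by
    intro j
    have hb := off_bounds m n cs.init
    have b1 : -2 * (m : ℤ) ≤ o1 * xc (c j) := by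
      nlinarith [xc_nonneg (c j), xc_lt (c j), hb.1.1, hb.1.2]
    have b2 : -2 * (n : ℤ) ≤ o2 * yc (c j) := by
      nlinarith [yc_nonneg (c j), yc_lt (c j), hb.2.1, hb.2.2]
    linarith
  have hex : ∃ j, G.Adj (k j) (c (j + 1)) := by
    by_contra hno
    push_neg at hno
    set N : ℕ := (o1 * xc (c 0) + o2 * yc (c 0) + 2 * m + 2 * n + 1).toNat with hN
    have h1 := (prefixlem N (fun i _ => hno i)).2
    have h2 := hbound N
    have h3 : (o1 * xc (c 0) + o2 * yc (c 0) + 2 * m + 2 * n + 1 : ℤ) ≤ (N : ℤ) :=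
      Int.self_le_toNat _
    omega
  set j0 := Nat.find hex with hj0
  have hkill : G.Adj (k j0) (c (j0 + 1)) := Nat.find_spec hex
  have hmin : ∀ i, i < j0 → ¬ G.Adj (k i) (c (i + 1)) := fun i hi => Nat.find_min hex hi
  have hInv : ∀ i, i ≤ j0 → xc (k i) = xc (c i) + o1 ∧ yc (k i) = yc (c i) + o2 := by
    intro i hi
    exact (prefixlem i (fun t ht => hmin t (by omega))).1
  have hfinal : k (j0 + 1) = c (j0 + 1) := by
    have hthis : k (j0 + 1) =
        (if G.Adj (k j0) (c (j0 + 1)) then c (j0 + 1)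
         else if G.Adj (k j0) (mkF hm (xc (k j0) + xc (c (j0 + 1)) - xc (c j0)),
             mkF hn (yc (k j0) + yc (c (j0 + 1)) - yc (c j0))) then
             (mkF hm (xc (k j0) + xc (c (j0 + 1)) - xc (c j0)),
              mkF hn (yc (k j0) + yc (c (j0 + 1)) - yc (c j0)))
         else nudge hn (k j0)) := killerPos_succ_eq hm hn cs j0
    rw [hthis, if_pos hkill]
  refine ⟨j0 + 1, by omega, hfinal, ?_⟩
  intro t ht1 ht2
  have hi : t - 1 ≤ j0 := by omega
  have hinv := hInv (t - 1) hi
  have hstep : G.Adj (c (t - 1)) (c t) := by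
    have := hadj (t - 1)
    have ht : t - 1 + 1 = t := by omega
    rwa [ht] at this
  intro heq
  have heq' : c t = k (t - 1) := heq
  rw [heq'] at hstep
  exact H3 cs.init (c (t - 1)) (k (t - 1)) hinv.1 hinv.2 hstep

lemma offA1 (hm2 : 2 ≤ m) (c : Fin m × Fin n) :
    (off m n c).1 = if (c.1 : ℕ) + 1 < m then 1 else -1 := by
  unfold off; rw [if_pos hm2]

lemma offA2 (hm2 : 2 ≤ m) (c : Fin m × Fin n) :
    (off m n c).2 = if (c.2 : ℕ) + 1 < n then 1 else -1 := by
  unfold off; rw [if_pos hm2]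

lemma offB1 (hm1 : m = 1) (c : Fin m × Fin n) : (off m n c).1 = 0 := by
  unfold off; rw [if_neg (by omega : ¬ 2 ≤ m)]

lemma offB2 (hm1 : m = 1) (c : Fin m × Fin n) :
    (off m n c).2 = if (c.2 : ℕ) + 2 < n then 2 else -2 := by
  unfold off; rw [if_neg (by omega : ¬ 2 ≤ m)]

lemma offA1_cases (hm2 : 2 ≤ m) (c : Fin m × Fin n) :
    (off m n c).1 = 1 ∨ (off m n c).1 = -1 := by
  rw [offA1 hm2]
  by_cases hp : (c.1 : ℕ) + 1 < m
  · left; rw [if_pos hp]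
  · right; rw [if_neg hp]

lemma offA2_cases (hm2 : 2 ≤ m) (c : Fin m × Fin n) :
    (off m n c).2 = 1 ∨ (off m n c).2 = -1 := by
  rw [offA2 hm2]
  by_cases hp : (c.2 : ℕ) + 1 < n
  · left; rw [if_pos hp]
  · right; rw [if_neg hp]

lemma B_xc (hm1 : m = 1) (v : Fin m × Fin n) : xc v = 0 := by
  subst hm1
  have := v.1.isLt
  simp only [xc]
  omega

-- Case A hypotheses
lemma A_H1 (hm2 : 2 ≤ m) (hn2 : 2 ≤ n) (c0 : Fin m × Fin n) :
    0 ≤ xc c0 + (off m n c0).1 ∧ xc c0 + (off m n c0).1 < m ∧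
    0 ≤ yc c0 + (off m n c0).2 ∧ yc c0 + (off m n c0).2 < n := by
  have hx := c0.1.isLt
  have hy := c0.2.isLt
  rw [offA1 hm2, offA2 hm2]
  simp only [xc, yc]
  split_ifs <;> omega

lemma A_H3 (hm2 : 2 ≤ m) (c0 c k : Fin m × Fin n)
    (hkx : xc k = xc c + (off m n c0).1) (hky : yc k = yc c + (off m n c0).2) :
    ¬ ((pathGraph m).boxProd (pathGraph n)).Adj c k := by
  rw [adj_iff]
  rcases offA1_cases hm2 c0 with h1 | h1 <;> rcases offA2_cases hm2 c0 with h2 | h2 <;>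
    rw [h1] at hkx <;> rw [h2] at hky <;> omega

lemma A_H2 (hm2 : 2 ≤ m) (c0 c c' k : Fin m × Fin n)
    (hkx : xc k = xc c + (off m n c0).1) (hky : yc k = yc c + (off m n c0).2)
    (hcc : ((pathGraph m).boxProd (pathGraph n)).Adj c c')
    (hnk : ¬ ((pathGraph m).boxProd (pathGraph n)).Adj k c') :
    ∃ t : Fin m × Fin n, xc t = xc c' + (off m n c0).1 ∧ yc t = yc c' + (off m n c0).2 ∧
      ((pathGraph m).boxProd (pathGraph n)).Adj k t ∧
      (off m n c0).1 * xc c' + (off m n c0).2 * yc c' + 1 ≤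
        (off m n c0).1 * xc c + (off m n c0).2 * yc c := by
  rw [adj_iff] at hcc
  rcases hcc with ⟨hxm, hym⟩ | ⟨hym, hxm⟩
  · -- cop moved in x
    by_cases hdir : xc c' = xc c + (off m n c0).1
    · exact absurd (adj_iff.mpr (by
        rcases offA2_cases hm2 c0 with h2 | h2 <;> omega)) hnk
    · have e1 : xc ((c.1, k.2) : Fin m × Fin n) = xc c := rfl
      have e2 : yc ((c.1, k.2) : Fin m × Fin n) = yc k := rfl
      refine ⟨(c.1, k.2), ?_, ?_, adj_iff.mpr ?_, ?_⟩ <;>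
        rcases offA1_cases hm2 c0 with h1 | h1 <;>
        rcases offA2_cases hm2 c0 with h2 | h2 <;>
        simp only [h1, h2] at * <;> omega
  · -- cop moved in y
    by_cases hdir : yc c' = yc c + (off m n c0).2
    · exact absurd (adj_iff.mpr (by
        rcases offA1_cases hm2 c0 with h1 | h1 <;> omega)) hnk
    · have e1 : xc ((k.1, c.2) : Fin m × Fin n) = xc k := rfl
      have e2 : yc ((k.1, c.2) : Fin m × Fin n) = yc c := rfl
      refine ⟨(k.1, c.2), ?_, ?_, adj_iff.mpr ?_, ?_⟩ <;>
        rcases offA1_cases hm2 c0 with h1 | h1 <;>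
        rcases offA2_cases hm2 c0 with h2 | h2 <;>
        simp only [h1, h2] at * <;> omega

-- Case B hypotheses
lemma B_H1 (hm1 : m = 1) (hn4 : 4 ≤ n) (c0 : Fin m × Fin n) :
    0 ≤ xc c0 + (off m n c0).1 ∧ xc c0 + (off m n c0).1 < m ∧
    0 ≤ yc c0 + (off m n c0).2 ∧ yc c0 + (off m n c0).2 < n := by
  have hx := B_xc hm1 c0
  have hy := c0.2.isLt
  rw [offB1 hm1, offB2 hm1]
  simp only [yc]
  subst hm1
  split_ifs <;> omega

lemma B_H3 (hm1 : m = 1) (hn4 : 4 ≤ n) (c0 c k : Fin m × Fin n)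
    (hkx : xc k = xc c + (off m n c0).1) (hky : yc k = yc c + (off m n c0).2) :
    ¬ ((pathGraph m).boxProd (pathGraph n)).Adj c k := by
  have hxc := B_xc hm1 c
  have hxk := B_xc hm1 k
  rw [offB1 hm1] at hkx
  rw [offB2 hm1] at hky
  rw [adj_iff]
  by_cases hp : (c0.2 : ℕ) + 2 < n <;> simp only [if_pos, if_neg, hp, if_true, if_false] at hky <;> omega

lemma B_H2 (hm1 : m = 1) (hn4 : 4 ≤ n) (hn : 0 < n) (c0 c c' k : Fin m × Fin n)
    (hkx : xc k = xc c + (off m n c0).1) (hky : yc k = yc c + (off m n c0).2)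
    (hcc : ((pathGraph m).boxProd (pathGraph n)).Adj c c')
    (hnk : ¬ ((pathGraph m).boxProd (pathGraph n)).Adj k c') :
    ∃ t : Fin m × Fin n, xc t = xc c' + (off m n c0).1 ∧ yc t = yc c' + (off m n c0).2 ∧
      ((pathGraph m).boxProd (pathGraph n)).Adj k t ∧
      (off m n c0).1 * xc c' + (off m n c0).2 * yc c' + 1 ≤
        (off m n c0).1 * xc c + (off m n c0).2 * yc c := by
  have hxc := B_xc hm1 c
  have hxc' := B_xc hm1 c'
  have hxk := B_xc hm1 k
  have h2 : (off m n c0).2 = 2 ∨ (off m n c0).2 = -2 := by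
    rw [offB2 hm1]
    by_cases hp : (c0.2 : ℕ) + 2 < n
    · left; rw [if_pos hp]
    · right; rw [if_neg hp]
  rw [offB1 hm1] at hkx ⊢
  rw [adj_iff] at hcc
  rcases hcc with ⟨hxm, hym⟩ | ⟨hym, hxm⟩
  · exfalso; omega
  · rcases h2 with h2 | h2 <;> rw [h2] at hky ⊢
    · by_cases hdir : yc c' = yc c + 1
      · exact absurd (adj_iff.mpr (by omega)) hnk
      · have hr0 : 0 ≤ yc c + 1 := by have := yc_nonneg c; omega
        have hr1 : yc c + 1 < n := by have := yc_lt k; omega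
        have e2 : yc ((k.1, mkF hn (yc c + 1)) : Fin m × Fin n) = yc c + 1 :=
          mkF_val hn hr0 hr1
        have e1 : xc ((k.1, mkF hn (yc c + 1)) : Fin m × Fin n) = xc k := rfl
        exact ⟨(k.1, mkF hn (yc c + 1)), by omega, by omega,
          adj_iff.mpr (by omega), by omega⟩
    · by_cases hdir : yc c' = yc c - 1
      · exact absurd (adj_iff.mpr (by omega)) hnk
      · have hr0 : 0 ≤ yc c - 1 := by have := yc_nonneg k; omega
        have hr1 : yc c - 1 < n := by have := yc_lt c; omega
        have e2 : yc ((k.1, mkF hn (yc c - 1)) : Fin m × Fin n) = yc c - 1 :=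
          mkF_val hn hr0 hr1
        have e1 : xc ((k.1, mkF hn (yc c - 1)) : Fin m × Fin n) = xc k := rfl
        exact ⟨(k.1, mkF hn (yc c - 1)), by omega, by omega,
          adj_iff.mpr (by omega), by omega⟩

end GridKiller

end GridKillerProof

/-- For all integers `m`, `n` with either (`2 ≤ m` and `2 ≤ n`) or (`m = 1` and
`n ≥ 4`), the `m × n` grid graph `P_m □ P_n` is killer-win. -/
theorem grid_killerWin (m n : ℕ) (h : (2 ≤ m ∧ 2 ≤ n) ∨ (m = 1 ∧ 4 ≤ n)) :
    CopKiller.KillerWin ((SimpleGraph.pathGraph m).boxProd (SimpleGraph.pathGraph n)) := by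
  rcases h with ⟨hm2, hn2⟩ | ⟨hm1, hn4⟩
  · exact GridKiller.grid_killerWin_aux (by omega) (by omega) hn2
      (GridKiller.A_H1 hm2 hn2) (GridKiller.A_H3 hm2) (GridKiller.A_H2 hm2)
  · exact GridKiller.grid_killerWin_aux (by omega) (by omega) (by omega)
      (GridKiller.B_H1 hm1 hn4) (GridKiller.B_H3 hm1 hn4)
      (GridKiller.B_H2 hm1 hn4 (by omega))
end

section
/- For every integer m ≥ 1, there exists a finite simple graph that is killer-win for the cop and killer game, is not bipartite, and contains no cycle of length 2k+1 for any 1 ≤ k ≤ m. -/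
namespace KWAux

/-- Doubled odd cycle: vertices `Fin (2*(2*m+3))`, adjacent iff their residues
mod `2*m+3` are consecutive on the cycle `Z/(2*m+3)`. -/
def KG (m : ℕ) : SimpleGraph (Fin (2 * (2 * m + 3))) where
  Adj a b := ((b.val : ZMod (2 * m + 3)) - (a.val : ZMod (2 * m + 3)) = 1) ∨
             ((a.val : ZMod (2 * m + 3)) - (b.val : ZMod (2 * m + 3)) = 1)
  symm := by constructor; rintro a b (h | h) <;> [right; left] <;> exact h
  loopless := by
    constructor
    rintro a (h | h) <;>
    · rw [sub_self] at h
      haveI : Fact (1 < 2 * m + 3) := ⟨by omega⟩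
      exact one_ne_zero h.symm

lemma cast_mod (m a : ℕ) :
    (((a % (2 * (2 * m + 3))) : ℕ) : ZMod (2 * m + 3)) = (a : ZMod (2 * m + 3)) := by
  have h : (a % (2 * (2 * m + 3))) % (2 * m + 3) = a % (2 * m + 3) :=
    Nat.mod_mod_of_dvd a ⟨2, by ring⟩
  rw [← ZMod.natCast_mod (a % (2 * (2 * m + 3))) (2 * m + 3), h, ZMod.natCast_mod]

def twin (m : ℕ) (v : Fin (2 * (2 * m + 3))) : Fin (2 * (2 * m + 3)) :=
  ⟨(v.val + (2 * m + 3)) % (2 * (2 * m + 3)), Nat.mod_lt _ (by omega)⟩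

def nbr (m : ℕ) (v : Fin (2 * (2 * m + 3))) : Fin (2 * (2 * m + 3)) :=
  ⟨(v.val + 1) % (2 * (2 * m + 3)), Nat.mod_lt _ (by omega)⟩

lemma twin_cast (m : ℕ) (v : Fin (2 * (2 * m + 3))) :
    (((twin m v).val : ℕ) : ZMod (2 * m + 3)) = (v.val : ZMod (2 * m + 3)) := by
  show (((v.val + (2 * m + 3)) % (2 * (2 * m + 3)) : ℕ) : ZMod (2 * m + 3)) = _
  rw [cast_mod, Nat.cast_add, ZMod.natCast_self, add_zero]

lemma adj_twin_iff (m : ℕ) (v x : Fin (2 * (2 * m + 3))) :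
    (KG m).Adj (twin m v) x ↔ (KG m).Adj v x := by
  show (_ ∨ _) ↔ (_ ∨ _)
  rw [twin_cast]

lemma not_adj_twin (m : ℕ) (v : Fin (2 * (2 * m + 3))) :
    ¬ (KG m).Adj v (twin m v) := by
  haveI : Fact (1 < 2 * m + 3) := ⟨by omega⟩
  rintro (h | h) <;>
  · rw [twin_cast, sub_self] at h
    exact one_ne_zero h.symm

lemma adj_nbr (m : ℕ) (v : Fin (2 * (2 * m + 3))) : (KG m).Adj v (nbr m v) := by
  left
  show (((v.val + 1) % (2 * (2 * m + 3)) : ℕ) : ZMod (2 * m + 3)) - _ = 1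
  rw [cast_mod, Nat.cast_add, Nat.cast_one]
  ring

instance KGdec (m : ℕ) : DecidableRel (KG m).Adj := fun a b =>
  decidable_of_iff (((b.val : ZMod (2 * m + 3)) - (a.val : ZMod (2 * m + 3)) = 1) ∨
    ((a.val : ZMod (2 * m + 3)) - (b.val : ZMod (2 * m + 3)) = 1)) Iff.rfl

def KS (m : ℕ) : CopKiller.KillerStrategy (Fin (2 * (2 * m + 3))) where
  init := twin m
  move h c :=
    match h with
    | [] => c
    | s :: _ => if (KG m).Adj s.2 c then c else nbr m s.2

lemma KS_legal (m : ℕ) : CopKiller.KillerLegal (KG m) (KS m) := by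
  intro h s hs c
  cases h with
  | nil => simp at hs
  | cons a t =>
    have ha : a = s := by simpa using hs
    rw [← ha]
    show (KG m).Adj a.2 (if (KG m).Adj a.2 c then c else nbr m a.2)
    split_ifs with hadj
    · exact hadj
    · exact adj_nbr m a.2

lemma KS_win (m : ℕ) : ∀ cs, CopKiller.CopLegal (KG m) cs →
    CopKiller.KillerWinsPlay cs (KS m) := by
  intro cs hcs
  have h0 : CopKiller.hist cs (KS m) 0 = [(cs.init, twin m cs.init)] := rfl
  have hc1 : CopKiller.copPos cs (KS m) 1 = cs.move (CopKiller.hist cs (KS m) 0) := rfl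
  have hadj : (KG m).Adj cs.init (cs.move (CopKiller.hist cs (KS m) 0)) :=
    hcs (CopKiller.hist cs (KS m) 0) (cs.init, twin m cs.init) (by rw [h0]; rfl)
  refine ⟨1, le_refl 1, ?_, ?_⟩
  · have hmove : ∀ x, (KG m).Adj cs.init x →
        (KS m).move [(cs.init, twin m cs.init)] x = x := by
      intro x hx
      show (if (KG m).Adj (twin m cs.init) x then x else nbr m (twin m cs.init)) = x
      rw [if_pos ((adj_twin_iff m cs.init x).mpr hx)]
    show (KS m).move (CopKiller.hist cs (KS m) 0) (cs.move (CopKiller.hist cs (KS m) 0)) =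
      cs.move (CopKiller.hist cs (KS m) 0)
    rw [h0]
    exact hmove _ (h0 ▸ hadj)
  · intro k hk1 hk2
    interval_cases k
    show cs.move (CopKiller.hist cs (KS m) 0) ≠ (KS m).init cs.init
    intro heq
    have heq' : cs.move (CopKiller.hist cs (KS m) 0) = twin m cs.init := heq
    apply not_adj_twin m cs.init
    rw [← heq']
    exact hadj

lemma KG_killerWin (m : ℕ) : CopKiller.KillerWin (KG m) :=
  ⟨KS m, KS_legal m, KS_win m⟩

lemma walk_parity (m : ℕ) {a b : Fin (2 * (2 * m + 3))} (w : (KG m).Walk a b) :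
    ∃ z : ℤ, ((z : ZMod (2 * m + 3)) = (b.val : ZMod (2 * m + 3)) - (a.val : ZMod (2 * m + 3)))
      ∧ z.natAbs ≤ w.length ∧ (z + w.length) % 2 = 0 := by
  induction w with
  | nil => exact ⟨0, by simp, by simp, by simp⟩
  | @cons a c b h w ih =>
    obtain ⟨z, hz, hle, hpar⟩ := ih
    rcases h with h | h
    · refine ⟨z + 1, ?_, ?_, ?_⟩
      · push_cast
        linear_combination hz - h
      · change _ ≤ w.length + 1
        omega
      · change (_ + ((w.length + 1 : ℕ) : ℤ)) % 2 = 0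
        push_cast
        omega
    · refine ⟨z - 1, ?_, ?_, ?_⟩
      · push_cast
        linear_combination hz + h
      · change _ ≤ w.length + 1
        omega
      · change (_ + ((w.length + 1 : ℕ) : ℤ)) % 2 = 0
        push_cast
        omega

lemma no_short_odd_closed_walk (m : ℕ) (k : ℕ) (hk : k ≤ m) (v : Fin (2 * (2 * m + 3)))
    (w : (KG m).Walk v v) : w.length ≠ 2 * k + 1 := by
  intro hlen
  obtain ⟨z, hz, hle, hpar⟩ := walk_parity m w
  rw [sub_self] at hz
  have hdvd : ((2 * m + 3 : ℕ) : ℤ) ∣ z := by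
    rwa [ZMod.intCast_zmod_eq_zero_iff_dvd] at hz
  obtain ⟨t, rfl⟩ := hdvd
  rw [hlen] at hle hpar
  rcases eq_or_ne t 0 with rfl | ht
  · simp at hpar
  · have h1 : 1 ≤ t.natAbs := by omega
    have h2 : (2 * m + 3) * 1 ≤ (2 * m + 3) * t.natAbs :=
      Nat.mul_le_mul_left _ h1
    rw [Int.natAbs_mul, Int.natAbs_natCast] at hle
    omega

open Fin.NatCast in
lemma not_colorable_two (m : ℕ) : ¬ (KG m).Colorable 2 := by
  rintro ⟨c⟩
  set E : ℕ → Fin (2 * (2 * m + 3)) :=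
    fun i => ⟨i % (2 * m + 3), by have := Nat.mod_lt i (show 0 < 2*m+3 by omega); omega⟩
    with hE
  have hcastE : ∀ i : ℕ, ((E i).val : ZMod (2 * m + 3)) = (i : ZMod (2 * m + 3)) := by
    intro i
    show (((i % (2 * m + 3)) : ℕ) : ZMod (2 * m + 3)) = _
    rw [ZMod.natCast_mod]
  have hadjE : ∀ i : ℕ, (KG m).Adj (E i) (E (i + 1)) := by
    intro i
    left
    rw [hcastE, hcastE]
    push_cast
    ring
  have hstep : ∀ i : ℕ, c (E (i + 1)) = c (E i) + 1 := by
    intro i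
    have h := c.valid (hadjE i)
    have key : ∀ x y : Fin 2, x ≠ y → y = x + 1 := by decide
    exact key _ _ h
  have hiter : ∀ i : ℕ, c (E i) = c (E 0) + (i : Fin 2) := by
    intro i
    induction i with
    | zero => simp
    | succ j ih =>
      rw [hstep j, ih]
      push_cast
      rw [add_assoc]
  have hEeq : E (2 * m + 3) = E 0 := by
    simp [hE]
  have hmain := hiter (2 * m + 3)
  rw [hEeq] at hmain
  have hcast : ((2 * m + 3 : ℕ) : Fin 2) = 1 := by
    show (((2 * m + 3) : ℕ) : ZMod 2) = 1
    rw [← ZMod.natCast_mod]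
    have : (2 * m + 3) % 2 = 1 := by omega
    rw [this, Nat.cast_one]
  rw [hcast, left_eq_add] at hmain
  exact absurd hmain (by decide)

end KWAux

/-- For every integer `m ≥ 1`, there exists a finite simple graph that is
killer-win, is not bipartite, and contains no cycle of length `2k+1` for any `1 ≤ k ≤ m`. -/
theorem exists_killerWin_nonbipartite_oddCycleFree (m : ℕ) (hm : 1 ≤ m) :
    ∃ (n : ℕ) (G : SimpleGraph (Fin n)),
      CopKiller.KillerWin G ∧ ¬ G.Colorable 2 ∧
      ∀ k : ℕ, 1 ≤ k → k ≤ m →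
        ∀ (v : Fin n) (c : G.Walk v v), c.IsCycle → c.length ≠ 2 * k + 1 := by
  refine ⟨2 * (2 * m + 3), KWAux.KG m, KWAux.KG_killerWin m, KWAux.not_colorable_two m, ?_⟩
  intro k hk1 hk2 v c _hc
  exact KWAux.no_short_odd_closed_walk m k hk2 v c
end
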